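/- arXiv:2104.13793 — 2 statements merged into one kernel-verified Lean document; each statement's English description precedes it below -/
import Mathlib

section
/- For every hypergraph H and every k ≥ 1: if H has a hypertree decomposition of width ≤ k, then Algorithm log-k returns true; equivalently (completeness of the Decomp function on induced subhypergraphs): for every D-induced extended subhypergraph (E', Sp, Con) of H arising from a normal-form HD D of width ≤ k, there exists an HD of width ≤ k of (E', Sp, Con) in which some node is a balanced separator. -/
open scoped Classical

/-- A hypergraph: a finite set of nonempty hyperedges over vertex type `V`. -/
structure FinHypergraph (V : Type) [DecidableEq V] where
  edges : Finset (Finset V)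
  edge_nonempty : ∀ e ∈ edges, e.Nonempty

/-- The vertex set of a hypergraph: the union of its edges. -/
noncomputable def FinHypergraph.verts {V : Type} [DecidableEq V] (H : FinHypergraph V) :
    Finset V := H.edges.sup id

/-- An extended subhypergraph `(E', Sp, Con)` of a hypergraph `H`. -/
structure ExtSubHG {V : Type} [DecidableEq V] (H : FinHypergraph V) where
  E : Finset (Finset V)
  Sp : Finset (Finset V)
  Con : Finset V
  E_subset : E ⊆ H.edges
  Sp_subset : ∀ s ∈ Sp, s ⊆ H.verts
  Con_subset : Con ⊆ H.verts

/-- The vertices of an extended subhypergraph: `V(H') = ⋃E' ∪ ⋃Sp`. -/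
noncomputable def ExtSubHG.verts {V : Type} [DecidableEq V] {H : FinHypergraph V}
    (H' : ExtSubHG H) : Finset V := (H'.E ∪ H'.Sp).sup id

/-- A finite rooted tree, given by a parent function from which the root is reachable. -/
structure RTree (α : Type) where
  root : α
  parent : α → α
  parent_root : parent root = root
  reaches_root : ∀ u, ∃ k, parent^[k] u = root

namespace RTree

variable {α : Type}

/-- `u` is an ancestor of `w` (possibly `u = w`). -/
def isAnc (T : RTree α) (u w : α) : Prop := ∃ k, T.parent^[k] w = u

/-- `u` is a proper ancestor of `w`. -/
def properAnc (T : RTree α) (u w : α) : Prop := T.isAnc u w ∧ u ≠ w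

/-- `c` is a child of `u`. -/
def isChild (T : RTree α) (c u : α) : Prop := T.parent c = u ∧ c ≠ u

/-- The subtree `T_u` rooted at `u`: all descendants of `u` (including `u`). -/
noncomputable def subtree (T : RTree α) [Fintype α] (u : α) : Finset α :=
  Finset.univ.filter (fun w => T.isAnc u w)

/-- The part of the tree strictly above `u`: all nodes outside the subtree `T_u`. -/
noncomputable def outside (T : RTree α) [Fintype α] (u : α) : Finset α :=
  Finset.univ.filter (fun w => ¬ T.isAnc u w)

/-- `x` lies on the (unique) path between `u` and `w` in the tree `T`. -/
def onPath (T : RTree α) (u w x : α) : Prop :=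
  (T.isAnc x u ∨ T.isAnc x w) ∧ ∀ a, T.isAnc a u → T.isAnc a w → T.isAnc a x

/-- A set of nodes is connected in `T` if it is closed under taking paths. -/
def connectedIn (T : RTree α) (S : Set α) : Prop :=
  ∀ u ∈ S, ∀ w ∈ S, ∀ x, T.onPath u w x → x ∈ S

/-- `u` is a leaf of `T`. -/
def isLeaf (T : RTree α) (u : α) : Prop := ∀ c, ¬ T.isChild c u

end RTree

/-- `[U]`-adjacency on a set `F` of (possibly special) edges:
`f` and `g` are adjacent iff they share a vertex outside `U`. -/
def UAdj {V : Type} [DecidableEq V] (F : Finset (Finset V)) (U : Finset V)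
    (f g : Finset V) : Prop :=
  f ∈ F ∧ g ∈ F ∧ ((f ∩ g) \ U).Nonempty

/-- `[U]`-connectedness: the transitive closure of `[U]`-adjacency (note that this
relation is reflexive exactly on the edges `f ∈ F` with `f \ U ≠ ∅`). -/
def UConn {V : Type} [DecidableEq V] (F : Finset (Finset V)) (U : Finset V)
    (f g : Finset V) : Prop :=
  Relation.TransGen (UAdj F U) f g

/-- A `[U]`-component of `F`: a maximally `[U]`-connected subset of `F`. -/
def IsUComponent {V : Type} [DecidableEq V] (F : Finset (Finset V)) (U : Finset V)
    (C : Finset (Finset V)) : Prop :=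
  C ⊆ F ∧ C.Nonempty ∧ (∀ f ∈ C, ∀ g ∈ C, UConn F U f g) ∧
  ∀ C', C ⊂ C' → C' ⊆ F → ∃ f ∈ C', ∃ g ∈ C', ¬ UConn F U f g

/-- Conditions (1)–(6): `(T, χ, lam)` is a hypertree decomposition of the extended
subhypergraph `(E', Sp, Con)` of the hypergraph `H`. -/
structure IsHD {V α : Type} [DecidableEq V] (H : FinHypergraph V)
    (E' Sp : Finset (Finset V)) (Con : Finset V)
    (T : RTree α) (χ : α → Finset V) (lam : α → Finset (Finset V)) : Prop where
  cond1 : ∀ u, (lam u ⊆ H.edges ∧ χ u ⊆ (lam u).sup id) ∨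
    (∃ s ∈ Sp, lam u = {s} ∧ χ u = s)
  cond2E : ∀ f ∈ E', ∃ u, f ⊆ χ u
  cond2Sp : ∀ f ∈ Sp, ∃ u, lam u = {f} ∧ χ u = f
  cond3 : ∀ v ∈ (E' ∪ Sp).sup id, T.connectedIn {u | v ∈ χ u}
  cond4 : ∀ u w, T.isAnc u w → χ w ∩ (lam u).sup id ⊆ χ u
  cond5 : ∀ u, (∃ s ∈ Sp, lam u = {s}) → T.isLeaf u
  cond6 : Con ⊆ χ T.root

/-- A classical hypertree decomposition of a hypergraph `H`
(Gottlob–Leone–Scarcello, conditions (1)–(4)). -/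
structure IsClassicalHD {V α : Type} [DecidableEq V] (H : FinHypergraph V)
    (T : RTree α) (χ : α → Finset V) (lam : α → Finset (Finset V)) : Prop where
  cover : ∀ e ∈ H.edges, ∃ u, e ⊆ χ u
  conn : ∀ v ∈ H.verts, T.connectedIn {u | v ∈ χ u}
  lam_edges : ∀ u, lam u ⊆ H.edges
  chi_sub_lam : ∀ u, χ u ⊆ (lam u).sup id
  special : ∀ u w, T.isAnc u w → χ w ∩ (lam u).sup id ⊆ χ u

/-- `cov(u)`: the (special) edges of `E' ∪ Sp` covered for the first time at node `u`. -/
noncomputable def covAt {V α : Type} [DecidableEq V] (T : RTree α)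
    (χ : α → Finset V) (E' Sp : Finset (Finset V)) (u : α) : Finset (Finset V) :=
  (E' ∪ Sp).filter (fun f => f ⊆ χ u ∧ ∀ u', T.properAnc u' u → ¬ f ⊆ χ u')

/-- `cov(T')` for a set of nodes `T'`. -/
noncomputable def covTree {V α : Type} [DecidableEq V] (T : RTree α)
    (χ : α → Finset V) (E' Sp : Finset (Finset V)) (S : Finset α) :
    Finset (Finset V) :=
  S.biUnion (covAt T χ E' Sp)

/-- Node `u` is a balanced separator of the decomposition `(T, χ)` of `(E', Sp, _)`:
every child subtree covers at most `(|E'| + |Sp|)/2` (special) edges, and the part of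
the tree above `u` covers strictly fewer than `(|E'| + |Sp|)/2` (special) edges. -/
noncomputable def IsBalancedSep {V α : Type} [DecidableEq V] [Fintype α]
    (T : RTree α) (χ : α → Finset V) (E' Sp : Finset (Finset V)) (u : α) : Prop :=
  (∀ c, T.isChild c u →
      2 * (covTree T χ E' Sp (T.subtree c)).card ≤ E'.card + Sp.card) ∧
  2 * (covTree T χ E' Sp (T.outside u)).card < E'.card + Sp.card

/-- The normal form of HDs of extended subhypergraphs (Definition: for every parent `p`
with child `c`, (1) `cov(T_c)` is a `[χ(p)]`-component; (2) some edge of it is covered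
at `c`; (3) `χ(c) = ⋃λ(c) ∩ ⋃cov(T_c)`). -/
noncomputable def IsNormalForm {V α : Type} [DecidableEq V] [Fintype α]
    (E' Sp : Finset (Finset V))
    (T : RTree α) (χ : α → Finset V) (lam : α → Finset (Finset V)) : Prop :=
  ∀ p c, T.isChild c p →
    IsUComponent (E' ∪ Sp) (χ p) (covTree T χ E' Sp (T.subtree c)) ∧
    (∃ f ∈ covTree T χ E' Sp (T.subtree c), f ⊆ χ c) ∧
    χ c = (lam c).sup id ∩ (covTree T χ E' Sp (T.subtree c)).sup id

namespace RTree

variable {α : Type} {T : RTree α}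

theorem isAnc_refl (T : RTree α) (u : α) : T.isAnc u u := ⟨0, rfl⟩

theorem isAnc_trans {a b c : α} (h1 : T.isAnc a b) (h2 : T.isAnc b c) : T.isAnc a c := by
  obtain ⟨i, hi⟩ := h1; obtain ⟨j, hj⟩ := h2
  exact ⟨i + j, by rw [Function.iterate_add_apply, hj, hi]⟩

theorem parent_iterate_root (T : RTree α) (k : ℕ) : T.parent^[k] T.root = T.root := by
  induction k with
  | zero => rfl
  | succ k ih => rw [Function.iterate_succ_apply', ih, T.parent_root]

theorem isAnc_root (T : RTree α) (u : α) : T.isAnc T.root u := T.reaches_root u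

theorem eq_root_of_isAnc_root {u : α} (h : T.isAnc u T.root) : u = T.root := by
  obtain ⟨k, hk⟩ := h
  rw [parent_iterate_root] at hk; exact hk.symm

theorem isAnc_antisymm {a b : α} (h1 : T.isAnc a b) (h2 : T.isAnc b a) : a = b := by
  obtain ⟨i, hi⟩ := h1; obtain ⟨j, hj⟩ := h2
  rcases Nat.eq_zero_or_pos (i + j) with h0 | hpos
  · have : i = 0 := by omega
    subst this; exact hi.symm
  · -- a is periodic with period i+j, hence a = root, then b = root
    have hper : T.parent^[i + j] a = a := by
      rw [Function.iterate_add_apply, hj, hi]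
    have hmul : ∀ c : ℕ, T.parent^[c * (i + j)] a = a := by
      intro c
      induction c with
      | zero => simp
      | succ c ih => rw [Nat.succ_mul, Function.iterate_add_apply, hper, ih]
    obtain ⟨m, hm⟩ := T.reaches_root a
    have hroot : a = T.root := by
      have h1 : T.parent^[m * (i + j)] a = a := hmul m
      have h2 : T.parent^[m * (i + j)] a = T.root := by
        have : m * (i + j) = (m * (i + j) - m) + m := by
          have : m ≤ m * (i + j) := Nat.le_mul_of_pos_right m hpos
          omega
        rw [this, Function.iterate_add_apply, hm, parent_iterate_root]
      rw [h1] at h2; exact h2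
    subst hroot
    rw [parent_iterate_root] at hj; exact hj
  
theorem anc_comparable {a b u : α} (h1 : T.isAnc a u) (h2 : T.isAnc b u) :
    T.isAnc a b ∨ T.isAnc b a := by
  obtain ⟨i, hi⟩ := h1; obtain ⟨j, hj⟩ := h2
  rcases le_total i j with h | h
  · right
    refine ⟨j - i, ?_⟩
    rw [← hi, ← Function.iterate_add_apply, Nat.sub_add_cancel h, hj]
  · left
    refine ⟨i - j, ?_⟩
    rw [← hj, ← Function.iterate_add_apply, Nat.sub_add_cancel h, hi]

theorem exists_lca (T : RTree α) (u w : α) :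
    ∃ m, T.isAnc m u ∧ T.isAnc m w ∧ T.onPath u w m := by
  have hex : ∃ k, T.isAnc (T.parent^[k] u) w := by
    obtain ⟨k, hk⟩ := T.reaches_root u
    exact ⟨k, by rw [hk]; exact T.isAnc_root w⟩
  classical
  let k0 := Nat.find hex
  have hk0 : T.isAnc (T.parent^[k0] u) w := Nat.find_spec hex
  refine ⟨T.parent^[k0] u, ⟨k0, rfl⟩, hk0, ?_, ?_⟩
  · left; exact ⟨k0, rfl⟩
  · intro a hau haw
    obtain ⟨i, hi⟩ := hau
    have hik0 : k0 ≤ i := by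
      by_contra hlt
      push_neg at hlt
      exact Nat.find_min hex hlt (by rw [hi]; exact haw)
    refine ⟨i - k0, ?_⟩
    rw [← hi, ← Function.iterate_add_apply, Nat.sub_add_cancel hik0]

theorem eq_root_of_parent_fix {u : α} (h : T.parent u = u) : u = T.root := by
  obtain ⟨k, hk⟩ := T.reaches_root u
  have : ∀ j, T.parent^[j] u = u := by
    intro j; induction j with
    | zero => rfl
    | succ j ih => rw [Function.iterate_succ_apply', ih, h]
  rw [this k] at hk; exact hk

end RTree
section CovLemmas

variable {V α : Type} [DecidableEq V] {T : RTree α} {χ : α → Finset V}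
  {E' Sp : Finset (Finset V)}

theorem mem_covAt_iff {f : Finset V} {u : α} :
    f ∈ covAt T χ E' Sp u ↔
      f ∈ E' ∪ Sp ∧ f ⊆ χ u ∧ ∀ u', T.properAnc u' u → ¬ f ⊆ χ u' := by
  simp [covAt, Finset.mem_filter, and_assoc]

theorem cov_unique
    (hconn : ∀ v ∈ (E' ∪ Sp).sup id, T.connectedIn {u | v ∈ χ u})
    {f : Finset V} {t t' : α} (hne : f.Nonempty)
    (h1 : f ∈ covAt T χ E' Sp t) (h2 : f ∈ covAt T χ E' Sp t') : t = t' := by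
  rw [mem_covAt_iff] at h1 h2
  obtain ⟨m, hmt, hmt', hpath⟩ := T.exists_lca t t'
  have hfm : f ⊆ χ m := by
    intro v hv
    have hvsup : v ∈ (E' ∪ Sp).sup id := by
      exact Finset.mem_sup.2 ⟨f, h1.1, hv⟩
    exact hconn v hvsup t (h1.2.1 hv) t' (h2.2.1 hv) m hpath
  have ht : m = t := by
    by_contra hne'
    exact h1.2.2 m ⟨hmt, hne'⟩ hfm
  have ht' : m = t' := by
    by_contra hne'
    exact h2.2.2 m ⟨hmt', hne'⟩ hfm
  rw [← ht, ht']

theorem cov_exists {f : Finset V} {w : α} (hf : f ∈ E' ∪ Sp) (hw : f ⊆ χ w) :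
    ∃ t, T.isAnc t w ∧ f ∈ covAt T χ E' Sp t := by
  classical
  obtain ⟨m, hm⟩ := T.reaches_root w
  set J := (Finset.range (m + 1)).filter (fun j => f ⊆ χ (T.parent^[j] w)) with hJ
  have h0J : (0 : ℕ) ∈ J := by
    simp [hJ, Finset.mem_filter, hw]
  have hJne : J.Nonempty := ⟨0, h0J⟩
  set j0 := J.max' hJne with hj0
  have hj0J : j0 ∈ J := J.max'_mem hJne
  have hj0le : j0 ≤ m := by
    have := (Finset.mem_filter.1 hj0J).1
    simp [Finset.mem_range] at this; omega
  have hj0cov : f ⊆ χ (T.parent^[j0] w) := (Finset.mem_filter.1 hj0J).2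
  refine ⟨T.parent^[j0] w, ⟨j0, rfl⟩, ?_⟩
  rw [mem_covAt_iff]
  refine ⟨hf, hj0cov, ?_⟩
  rintro a ⟨⟨i, hi⟩, hane⟩ hfa
  rcases Nat.eq_zero_or_pos i with h0 | hipos
  · subst h0; exact hane hi.symm
  have ha : a = T.parent^[j0 + i] w := by
    rw [Nat.add_comm, Function.iterate_add_apply, hi]
  rcases le_or_gt (j0 + i) m with hle | hgt
  · have : j0 + i ∈ J := by
      simp only [hJ, Finset.mem_filter, Finset.mem_range]
      exact ⟨by omega, by rw [← ha]; exact hfa⟩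
    have := J.le_max' _ this
    omega
  · have haroot : a = T.root := by
      rw [ha]
      have : j0 + i = (j0 + i - m) + m := by omega
      rw [this, Function.iterate_add_apply, hm, RTree.parent_iterate_root]
    have hmJ : m ∈ J := by
      simp only [hJ, Finset.mem_filter, Finset.mem_range]
      refine ⟨by omega, ?_⟩
      rw [hm, ← haroot]; exact hfa
    have := J.le_max' _ hmJ
    have hj0m : j0 = m := by omega
    apply hane
    rw [haroot, hj0m, hm]

end CovLemmas
section Shadow

variable {α : Type} (T : RTree α) (r' : α)

/-- The parent function of the truncated tree rooted at `r'`. -/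
noncomputable def pparent : α → α := fun a => if a = r' then r' else T.parent a

variable {T r'} {S : Finset α}

theorem pparent_r' : pparent T r' r' = r' := if_pos rfl

theorem pparent_ne {a : α} (h : a ≠ r') : pparent T r' a = T.parent a := if_neg h

theorem pparent_iter_r' (k : ℕ) : (pparent T r')^[k] r' = r' := by
  induction k with
  | zero => rfl
  | succ k ih => rw [Function.iterate_succ_apply', ih, pparent_r']

/-- Predicate: `a` belongs to `S` or is a boundary node. -/
def NP (T : RTree α) (S : Finset α) (a : α) : Prop := a ∈ S ∨ T.parent a ∈ S

theorem chain_S (hclosed : ∀ w ∈ S, w ≠ r' → T.parent w ∈ S)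
    {a : α} (ha : a ∈ S) :
    ∀ j, (∀ i, i < j → T.parent^[i] a ≠ r') →
      T.parent^[j] a ∈ S ∧ (pparent T r')^[j] a = T.parent^[j] a := by
  intro j
  induction j with
  | zero => intro _; exact ⟨ha, rfl⟩
  | succ j ih =>
    intro h
    obtain ⟨hS, hpp⟩ := ih (fun i hi => h i (by omega))
    have hne : T.parent^[j] a ≠ r' := h j (by omega)
    constructor
    · rw [Function.iterate_succ_apply']
      exact hclosed _ hS hne
    · rw [Function.iterate_succ_apply', Function.iterate_succ_apply', hpp,
        pparent_ne hne]

theorem L_S (hanc : ∀ w ∈ S, T.isAnc r' w)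
    (hclosed : ∀ w ∈ S, w ≠ r' → T.parent w ∈ S)
    {a : α} (ha : a ∈ S) :
    ∃ d, T.parent^[d] a = r' ∧
      (∀ j, j ≤ d → T.parent^[j] a ∈ S ∧ (pparent T r')^[j] a = T.parent^[j] a) ∧
      (∀ j, d ≤ j → (pparent T r')^[j] a = r') := by
  classical
  have hex : ∃ k, T.parent^[k] a = r' := hanc a ha
  set d := Nat.find hex with hd
  have hspec : T.parent^[d] a = r' := Nat.find_spec hex
  have hmain : ∀ j, j ≤ d → T.parent^[j] a ∈ S ∧ (pparent T r')^[j] a = T.parent^[j] a := by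
    intro j hj
    exact chain_S hclosed ha j (fun i hi => Nat.find_min hex (by omega))
  refine ⟨d, hspec, hmain, ?_⟩
  intro j hj
  have h1 : (pparent T r')^[d] a = r' := by
    rw [(hmain d le_rfl).2, hspec]
  calc (pparent T r')^[j] a = (pparent T r')^[j - d] ((pparent T r')^[d] a) := by
        rw [← Function.iterate_add_apply, Nat.sub_add_cancel hj]
    _ = r' := by rw [h1, pparent_iter_r']

theorem NP_r' (hrS : r' ∈ S) : NP T S r' := Or.inl hrS

theorem pparent_mem_S (hrS : r' ∈ S)
    (hclosed : ∀ w ∈ S, w ≠ r' → T.parent w ∈ S)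
    {a : α} (ha : NP T S a) : pparent T r' a ∈ S := by
  by_cases h : a = r'
  · rw [h, pparent_r']; exact hrS
  · rw [pparent_ne h]
    rcases ha with ha | ha
    · exact hclosed a ha h
    · exact ha

theorem NP_of_mem_S {a : α} (h : a ∈ S) : NP T S a := Or.inl h

theorem anc_r'_of_NP (hanc : ∀ w ∈ S, T.isAnc r' w)
    {a : α} (ha : NP T S a) : T.isAnc r' a := by
  rcases ha with ha | ha
  · exact hanc a ha
  · obtain ⟨k, hk⟩ := hanc _ ha
    exact ⟨k + 1, by rw [Function.iterate_succ_apply, hk]⟩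

theorem anc_cases (hanc : ∀ w ∈ S, T.isAnc r' w)
    (hclosed : ∀ w ∈ S, w ≠ r' → T.parent w ∈ S)
    {a b : α} (ha : NP T S a) (h : T.isAnc b a) :
    b = a ∨ b ∈ S ∨ T.isAnc b r' := by
  obtain ⟨k, hk⟩ := h
  rcases ha with haS | haB
  · obtain ⟨d, hd, hmain, _⟩ := L_S hanc hclosed haS
    rcases le_or_gt k d with hkd | hkd
    · exact Or.inr (Or.inl (hk ▸ (hmain k hkd).1))
    · refine Or.inr (Or.inr ⟨k - d, ?_⟩)
      rw [← hd, ← Function.iterate_add_apply, Nat.sub_add_cancel (le_of_lt hkd), hk]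
  · rcases Nat.eq_zero_or_pos k with h0 | hpos
    · subst h0; exact Or.inl hk.symm
    · obtain ⟨d, hd, hmain, _⟩ := L_S hanc hclosed haB
      obtain ⟨k', rfl⟩ : ∃ k', k = k' + 1 := ⟨k - 1, by omega⟩
      rw [Function.iterate_add_apply] at hk
      simp only [Function.iterate_one] at hk
      rcases le_or_gt k' d with hkd | hkd
      · exact Or.inr (Or.inl (hk ▸ (hmain _ hkd).1))
      · refine Or.inr (Or.inr ⟨k' - d, ?_⟩)
        rw [← hd, ← Function.iterate_add_apply, Nat.sub_add_cancel (le_of_lt hkd), hk]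

theorem anc'_of_anc_S (hanc : ∀ w ∈ S, T.isAnc r' w)
    (hclosed : ∀ w ∈ S, w ≠ r' → T.parent w ∈ S)
    {a b : α} (ha : a ∈ S) (hb : NP T S b) (h : T.isAnc b a) :
    ∃ k, (pparent T r')^[k] a = b := by
  obtain ⟨k, hk⟩ := h
  obtain ⟨d, hd, hmain, _⟩ := L_S hanc hclosed ha
  rcases le_or_gt k d with hkd | hkd
  · exact ⟨k, by rw [(hmain k hkd).2, hk]⟩
  · have hbr' : T.isAnc b r' := by
      refine ⟨k - d, ?_⟩
      rw [← hd, ← Function.iterate_add_apply, Nat.sub_add_cancel (le_of_lt hkd), hk]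
    have hr'b : T.isAnc r' b := anc_r'_of_NP hanc hb
    have : b = r' := RTree.isAnc_antisymm hbr' hr'b
    exact ⟨d, by rw [(hmain d le_rfl).2, hd, this]⟩

theorem anc'_of_anc (hrS : r' ∈ S) (hanc : ∀ w ∈ S, T.isAnc r' w)
    (hclosed : ∀ w ∈ S, w ≠ r' → T.parent w ∈ S)
    {a b : α} (ha : NP T S a) (hb : NP T S b) (h : T.isAnc b a) :
    ∃ k, (pparent T r')^[k] a = b := by
  by_cases haS : a ∈ S
  · exact anc'_of_anc_S hanc hclosed haS hb h
  · have haB : T.parent a ∈ S := ha.resolve_left haS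
    have hane : a ≠ r' := fun h' => haS (h' ▸ hrS)
    obtain ⟨k, hk⟩ := h
    rcases Nat.eq_zero_or_pos k with h0 | hpos
    · exact ⟨0, by subst h0; exact hk⟩
    · obtain ⟨k', rfl⟩ : ∃ k', k = k' + 1 := ⟨k - 1, by omega⟩
      rw [Function.iterate_add_apply] at hk
      simp only [Function.iterate_one] at hk
      obtain ⟨j, hj⟩ := anc'_of_anc_S hanc hclosed haB hb ⟨k', hk⟩
      refine ⟨j + 1, ?_⟩
      rw [Function.iterate_add_apply]
      simp only [Function.iterate_one]
      rw [pparent_ne hane, hj]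

theorem anc_of_anc' (hrS : r' ∈ S) (hanc : ∀ w ∈ S, T.isAnc r' w)
    (hclosed : ∀ w ∈ S, w ≠ r' → T.parent w ∈ S)
    {a b : α} (ha : NP T S a) (h : ∃ k, (pparent T r')^[k] a = b) :
    T.isAnc b a ∧ NP T S b := by
  obtain ⟨k, hk⟩ := h
  induction k generalizing a with
  | zero => exact ⟨hk ▸ RTree.isAnc_refl T a, hk ▸ ha⟩
  | succ k ih =>
    rw [Function.iterate_succ_apply] at hk
    have hpa : NP T S (pparent T r' a) := NP_of_mem_S (pparent_mem_S hrS hclosed ha)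
    obtain ⟨hanc', hNb⟩ := ih hpa hk
    refine ⟨RTree.isAnc_trans hanc' ?_, hNb⟩
    by_cases hr : a = r'
    · rw [hr, pparent_r']; exact RTree.isAnc_refl T r'
    · rw [pparent_ne hr]; exact ⟨1, rfl⟩

end Shadow
section Key

variable {V α : Type} [DecidableEq V] [Fintype α]

theorem mem_covTree_iff {T : RTree α} {χ : α → Finset V} {E' Sp : Finset (Finset V)}
    {X : Finset α} {f : Finset V} :
    f ∈ covTree T χ E' Sp X ↔ ∃ t ∈ X, f ∈ covAt T χ E' Sp t := by
  simp [covTree, Finset.mem_biUnion]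

theorem mem_subtree_iff {T : RTree α} {u w : α} :
    w ∈ T.subtree u ↔ T.isAnc u w := by
  simp [RTree.subtree]

theorem key_no_special
    (H : FinHypergraph V)
    (T : RTree α) (χ : α → Finset V) (lam : α → Finset (Finset V))
    (hD : IsHD H H.edges ∅ ∅ T χ lam)
    (hNF : IsNormalForm H.edges ∅ T χ lam)
    (S : Finset α) (r' : α)
    (hrS : r' ∈ S) (hanc : ∀ w ∈ S, T.isAnc r' w)
    (hr' : r' ≠ T.root)
    {u b : α} (hu : u ∈ S) (hbS : b ∉ S) (hbp : T.parent b ∈ S)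
    (hlam : lam u = {χ b}) : False := by
  classical
  have huroot : u ≠ T.root := by
    rintro rfl
    obtain ⟨k, hk⟩ := hanc _ hu
    rw [RTree.parent_iterate_root] at hk
    exact hr' hk.symm
  have hchildu : T.isChild u (T.parent u) :=
    ⟨rfl, fun h => huroot (RTree.eq_root_of_parent_fix h.symm)⟩
  have hbroot : b ≠ T.root := by
    rintro rfl
    rw [T.parent_root] at hbp
    exact hbS hbp
  have hchildb : T.isChild b (T.parent b) :=
    ⟨rfl, fun h => hbS (h ▸ hbp)⟩
  obtain ⟨_, H2u, H3u⟩ := hNF (T.parent u) u hchildu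
  obtain ⟨_, H2b, H3b⟩ := hNF (T.parent b) b hchildb
  have hsupu : (lam u).sup id = χ b := by rw [hlam]; simp
  have hχu_sub : χ u ⊆ χ b := by
    rw [H3u, hsupu]; exact Finset.inter_subset_left
  have hs_sub_covb : χ b ⊆ (covTree T χ H.edges ∅ (T.subtree b)).sup id := by
    intro v hv
    rw [H3b] at hv
    exact Finset.mem_of_mem_inter_right hv
  obtain ⟨f, hfcov, hfχu⟩ := H2u
  rw [mem_covTree_iff] at hfcov
  obtain ⟨t, htsub, hft⟩ := hfcov
  have htanc : T.isAnc u t := mem_subtree_iff.1 htsub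
  have hfU : f ∈ H.edges ∪ ∅ := (mem_covAt_iff.1 hft).1
  have hfχb : f ⊆ χ b := hfχu.trans hχu_sub
  obtain ⟨t0, ht0anc, hft0⟩ := cov_exists (T := T) hfU hfχb
  have hne : f.Nonempty := H.edge_nonempty f (by simpa using hfU)
  have ht0t : t0 = t := cov_unique hD.cond3 hne hft0 hft
  have huancb : T.isAnc u b := RTree.isAnc_trans htanc (ht0t ▸ ht0anc)
  have hsubsub : T.subtree b ⊆ T.subtree u := by
    intro x hx
    rw [mem_subtree_iff] at hx ⊢
    exact RTree.isAnc_trans huancb hx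
  have hcovsub : covTree T χ H.edges ∅ (T.subtree b) ⊆ covTree T χ H.edges ∅ (T.subtree u) := by
    intro g hg
    rw [mem_covTree_iff] at hg ⊢
    obtain ⟨x, hx, hgx⟩ := hg
    exact ⟨x, hsubsub hx, hgx⟩
  have hχu_eq : χ u = χ b := by
    refine Finset.Subset.antisymm hχu_sub ?_
    rw [H3u, hsupu]
    have hsup : (covTree T χ H.edges ∅ (T.subtree b)).sup id ⊆
        (covTree T χ H.edges ∅ (T.subtree u)).sup id := Finset.sup_mono hcovsub
    intro v hv
    exact Finset.mem_inter.2 ⟨hv, hsup (hs_sub_covb hv)⟩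
  obtain ⟨f0, hf0cov, hf0χb⟩ := H2b
  rw [mem_covTree_iff] at hf0cov
  obtain ⟨t1, ht1sub, hf0t1⟩ := hf0cov
  have ht1anc : T.isAnc b t1 := mem_subtree_iff.1 ht1sub
  have hut1 : T.isAnc u t1 := RTree.isAnc_trans huancb ht1anc
  have hune : u ≠ t1 := by
    rintro rfl
    exact hbS (RTree.isAnc_antisymm huancb ht1anc ▸ hu)
  exact (mem_covAt_iff.1 hf0t1).2.2 u ⟨hut1, hune⟩ (hχu_eq ▸ hf0χb)

end Key
/-- completeness on induced subhypergraphs: every `D`-induced extended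
subhypergraph of `H` arising from a subtree `S` (with root `r' ≠ root`) of a
normal-form HD `D` of `H` of width `≤ k` admits an HD of width `≤ k` that contains a
balanced separator node. -/
theorem logk_completeness {V α : Type} [DecidableEq V] [Fintype α]
    (H : FinHypergraph V) (k : ℕ) (hk : 1 ≤ k)
    (T : RTree α) (χ : α → Finset V) (lam : α → Finset (Finset V))
    (hD : IsHD H H.edges ∅ ∅ T χ lam)
    (hNF : IsNormalForm H.edges ∅ T χ lam)
    (hw : ∀ u, (lam u).card ≤ k)
    (S : Finset α) (r' : α)
    (hrS : r' ∈ S) (hanc : ∀ w ∈ S, T.isAnc r' w)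
    (hclosed : ∀ w ∈ S, w ≠ r' → T.parent w ∈ S)
    (hr' : r' ≠ T.root) :
    ∃ (n : ℕ) (T' : RTree (Fin n)) (χ' : Fin n → Finset V)
      (lam' : Fin n → Finset (Finset V)),
      IsHD H (covTree T χ H.edges ∅ S)
        ((Finset.univ.filter (fun u => u ∉ S ∧ T.parent u ∈ S)).image χ)
        (((covTree T χ H.edges ∅ S ∪
            (Finset.univ.filter (fun u => u ∉ S ∧ T.parent u ∈ S)).image χ).sup id) ∩
          (lam (T.parent r')).sup id)
        T' χ' lam' ∧
      (∀ u, (lam' u).card ≤ k) ∧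
      ∃ u, IsBalancedSep T' χ' (covTree T χ H.edges ∅ S)
        ((Finset.univ.filter (fun u => u ∉ S ∧ T.parent u ∈ S)).image χ) u := by
  classical
  set B : Finset α := Finset.univ.filter (fun u => u ∉ S ∧ T.parent u ∈ S) with hBdef
  set E'' : Finset (Finset V) := covTree T χ H.edges ∅ S with hEdef
  set Sp'' : Finset (Finset V) := B.image χ with hSpdef
  set N : Finset α := S ∪ B with hNdef
  have hB_iff : ∀ a, a ∈ B ↔ (a ∉ S ∧ T.parent a ∈ S) := by
    intro a; simp [hBdef]
  have hmemN : ∀ a, a ∈ N ↔ NP T S a := by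
    intro a
    simp only [hNdef, Finset.mem_union, hB_iff, NP]
    tauto
  have hr'N : r' ∈ N := (hmemN r').2 (Or.inl hrS)
  set n := N.card with hn
  set e : {x // x ∈ N} ≃ Fin n := N.equivFin with he
  set ι : Fin n → α := fun i => (e.symm i : α) with hι
  have hιmem : ∀ i, ι i ∈ N := fun i => (e.symm i).2
  have hιNP : ∀ i, NP T S (ι i) := fun i => (hmemN _).1 (hιmem i)
  have hι_inj : Function.Injective ι := by
    intro i j h
    have h2 : e.symm i = e.symm j := Subtype.ext h
    exact e.symm.injective h2
  have hιe : ∀ (a : α) (h : a ∈ N), ι (e ⟨a, h⟩) = a := by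
    intro a h; simp [hι]
  have hppmem : ∀ i : Fin n, pparent T r' (ι i) ∈ N :=
    fun i => (hmemN _).2 (NP_of_mem_S (pparent_mem_S hrS hclosed (hιNP i)))
  set pf : Fin n → Fin n := fun i => e ⟨pparent T r' (ι i), hppmem i⟩ with hpfdef
  set rt : Fin n := e ⟨r', hr'N⟩ with hrtdef
  have hιpf : ∀ i, ι (pf i) = pparent T r' (ι i) := fun i => hιe _ _
  have hιrt : ι rt = r' := hιe _ _
  have hpf_root : pf rt = rt := by
    apply hι_inj
    rw [hιpf, hιrt, pparent_r']
  have hpf_iter : ∀ (k' : ℕ) (i : Fin n), ι (pf^[k'] i) = (pparent T r')^[k'] (ι i) := by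
    intro k'
    induction k' with
    | zero => intro i; rfl
    | succ k' ih =>
      intro i
      rw [Function.iterate_succ_apply', Function.iterate_succ_apply', hιpf, ih]
  have hreach : ∀ i, ∃ k', pf^[k'] i = rt := by
    intro i
    rcases hιNP i with hS | hBp
    · obtain ⟨d, _, _, hge⟩ := L_S hanc hclosed hS
      exact ⟨d, hι_inj (by rw [hpf_iter, hge d le_rfl, hιrt])⟩
    · have hS' : pparent T r' (ι i) ∈ S := pparent_mem_S hrS hclosed (hιNP i)
      obtain ⟨d, _, _, hge⟩ := L_S hanc hclosed hS'
      refine ⟨d + 1, hι_inj ?_⟩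
      rw [hpf_iter, hιrt, Function.iterate_add_apply]
      simp only [Function.iterate_one]
      exact hge d le_rfl
  set T' : RTree (Fin n) := ⟨rt, pf, hpf_root, hreach⟩ with hT'def
  have hT'parent : T'.parent = pf := rfl
  have hT'root : T'.root = rt := rfl
  have hT'anc : ∀ i j, T'.isAnc i j ↔ T.isAnc (ι i) (ι j) := by
    intro i j
    constructor
    · rintro ⟨k', hk'⟩
      have hpp : (pparent T r')^[k'] (ι j) = ι i := by
        rw [← hpf_iter]
        exact congrArg ι hk'
      exact (anc_of_anc' hrS hanc hclosed (hιNP j) ⟨k', hpp⟩).1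
    · intro h
      obtain ⟨k', hk'⟩ := anc'_of_anc hrS hanc hclosed (hιNP j) (hιNP i) h
      exact ⟨k', hι_inj (by rw [hpf_iter, hk'])⟩
  set χ' : Fin n → Finset V := χ ∘ ι with hχ'def
  set lam' : Fin n → Finset (Finset V) :=
    (fun i => if ι i ∈ S then lam (ι i) else {χ (ι i)}) with hlam'def
  -- basic facts
  have hcond1T : ∀ a, lam a ⊆ H.edges ∧ χ a ⊆ (lam a).sup id := by
    intro a
    rcases hD.cond1 a with h | ⟨s, hs, _⟩
    · exact h
    · exact absurd hs (Finset.notMem_empty s)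
  have hE''cov : ∀ f ∈ E'', ∃ t ∈ S, f ∈ covAt T χ H.edges ∅ t := by
    intro f hf
    rw [hEdef, mem_covTree_iff] at hf
    exact hf
  have hE''edges : ∀ f ∈ E'', f ∈ H.edges := by
    intro f hf
    obtain ⟨t, _, hft⟩ := hE''cov f hf
    have := (mem_covAt_iff.1 hft).1
    simpa using this
  have hSp''mem : ∀ f ∈ Sp'', ∃ a, a ∉ S ∧ T.parent a ∈ S ∧ χ a = f := by
    intro f hf
    rw [hSpdef, Finset.mem_image] at hf
    obtain ⟨a, haB, hχa⟩ := hf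
    obtain ⟨h1, h2⟩ := (hB_iff a).1 haB
    exact ⟨a, h1, h2, hχa⟩
  have hχB_ne : ∀ a, a ∉ S → T.parent a ∈ S → (χ a).Nonempty := by
    intro a haS hap
    have hchild : T.isChild a (T.parent a) := ⟨rfl, fun h => haS (h ▸ hap)⟩
    obtain ⟨_, H2, _⟩ := hNF _ _ hchild
    obtain ⟨f0, hf0, hf0χ⟩ := H2
    rw [mem_covTree_iff] at hf0
    obtain ⟨t, _, hf0t⟩ := hf0
    have hf0E : f0 ∈ H.edges := by
      have := (mem_covAt_iff.1 hf0t).1; simpa using this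
    obtain ⟨v, hv⟩ := H.edge_nonempty f0 hf0E
    exact ⟨v, hf0χ hv⟩
  have hSp''ne : ∀ f ∈ Sp'', f.Nonempty := by
    intro f hf
    obtain ⟨a, h1, h2, rfl⟩ := hSp''mem f hf
    exact hχB_ne a h1 h2
  have hUne : ∀ f ∈ E'' ∪ Sp'', f.Nonempty := by
    intro f hf
    rcases Finset.mem_union.1 hf with h | h
    · exact H.edge_nonempty f (hE''edges f h)
    · exact hSp''ne f h
  have hvertsH : ∀ f ∈ E'' ∪ Sp'', ∀ v ∈ f, v ∈ (H.edges ∪ ∅ : Finset (Finset V)).sup id := by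
    intro f hf v hv
    rw [Finset.union_empty]
    rcases Finset.mem_union.1 hf with h | h
    · exact Finset.mem_sup.2 ⟨f, hE''edges f h, hv⟩
    · obtain ⟨a, _, _, rfl⟩ := hSp''mem f h
      have h1 : v ∈ (lam a).sup id := (hcond1T a).2 hv
      have h2 : (lam a).sup id ⊆ H.edges.sup id := Finset.sup_mono (hcond1T a).1
      exact h2 h1
  -- the six conditions
  have hcond1 : ∀ i, (lam' i ⊆ H.edges ∧ χ' i ⊆ (lam' i).sup id) ∨
      (∃ s ∈ Sp'', lam' i = {s} ∧ χ' i = s) := by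
    intro i
    by_cases hS : ι i ∈ S
    · left
      simp only [hlam'def, hχ'def, if_pos hS, Function.comp]
      exact hcond1T (ι i)
    · right
      have hpi : T.parent (ι i) ∈ S := (hιNP i).resolve_left hS
      refine ⟨χ (ι i), ?_, ?_, rfl⟩
      · rw [hSpdef, Finset.mem_image]
        exact ⟨ι i, (hB_iff _).2 ⟨hS, hpi⟩, rfl⟩
      · simp only [hlam'def, if_neg hS]
  have hcond2E : ∀ f ∈ E'', ∃ i, f ⊆ χ' i := by
    intro f hf
    obtain ⟨t, htS, hft⟩ := hE''cov f hf
    have htN : t ∈ N := (hmemN t).2 (Or.inl htS)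
    refine ⟨e ⟨t, htN⟩, ?_⟩
    simp only [hχ'def, Function.comp]
    rw [hιe]
    exact (mem_covAt_iff.1 hft).2.1
  have hcond2Sp : ∀ f ∈ Sp'', ∃ i, lam' i = {f} ∧ χ' i = f := by
    intro f hf
    obtain ⟨a, h1, h2, rfl⟩ := hSp''mem f hf
    have haN : a ∈ N := (hmemN a).2 (Or.inr h2)
    refine ⟨e ⟨a, haN⟩, ?_, ?_⟩
    · simp only [hlam'def]
      rw [if_neg (by rw [hιe]; exact h1)]
      rw [hιe]
    · simp only [hχ'def, Function.comp]
      rw [hιe]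
  have hcond3 : ∀ v ∈ (E'' ∪ Sp'').sup id, T'.connectedIn {i | v ∈ χ' i} := by
    intro v hv
    obtain ⟨f, hf, hvf⟩ := Finset.mem_sup.1 hv
    have hvH : v ∈ (H.edges ∪ ∅ : Finset (Finset V)).sup id := hvertsH f hf v hvf
    intro i hi j hj x hpath
    have hcomp1 : T.isAnc (ι x) (ι i) ∨ T.isAnc (ι x) (ι j) := by
      rcases hpath.1 with h | h
      · exact Or.inl ((hT'anc x i).1 h)
      · exact Or.inr ((hT'anc x j).1 h)
    have hcomp2 : ∀ a, T.isAnc a (ι i) → T.isAnc a (ι j) → T.isAnc a (ι x) := by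
      intro a hai haj
      have hcase : NP T S a ∨ T.isAnc a r' := by
        rcases anc_cases hanc hclosed (hιNP i) hai with h | h | h
        · exact Or.inl (h ▸ hιNP i)
        · exact Or.inl (NP_of_mem_S h)
        · exact Or.inr h
      rcases hcase with hNP | har'
      · have haN : a ∈ N := (hmemN a).2 hNP
        have h1 : T'.isAnc (e ⟨a, haN⟩) i := (hT'anc _ i).2 (by rw [hιe]; exact hai)
        have h2 : T'.isAnc (e ⟨a, haN⟩) j := (hT'anc _ j).2 (by rw [hιe]; exact haj)
        have h3 := hpath.2 _ h1 h2
        have := (hT'anc _ x).1 h3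
        rwa [hιe] at this
      · exact RTree.isAnc_trans har' (anc_r'_of_NP hanc (hιNP x))
    exact hD.cond3 v hvH (ι i) hi (ι j) hj (ι x) ⟨hcomp1, hcomp2⟩
  have hcond4 : ∀ i w, T'.isAnc i w → χ' w ∩ (lam' i).sup id ⊆ χ' i := by
    intro i w h
    have hT : T.isAnc (ι i) (ι w) := (hT'anc i w).1 h
    by_cases hS : ι i ∈ S
    · simp only [hlam'def, hχ'def, if_pos hS, Function.comp]
      exact hD.cond4 _ _ hT
    · have heq : ι i = ι w := by
        rcases anc_cases hanc hclosed (hιNP w) hT with h' | h' | h'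
        · exact h'
        · exact absurd h' hS
        · have := RTree.isAnc_antisymm h' (anc_r'_of_NP hanc (hιNP i))
          exact absurd (this ▸ hrS) hS
      intro v hv
      have hv1 := (Finset.mem_inter.1 hv).1
      simp only [hχ'def, Function.comp] at hv1 ⊢
      rwa [← heq] at hv1
  have hcond5 : ∀ i, (∃ s ∈ Sp'', lam' i = {s}) → T'.isLeaf i := by
    rintro i ⟨s, hsSp, hlami⟩
    by_cases hS : ι i ∈ S
    · exfalso
      obtain ⟨b, hb1, hb2, rfl⟩ := hSp''mem s hsSp
      simp only [hlam'def, if_pos hS] at hlami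
      exact key_no_special H T χ lam hD hNF S r' hrS hanc hr' hS hb1 hb2 hlami
    · intro c hc
      have hci : ι i = pparent T r' (ι c) := by
        have h1 := congrArg ι hc.1
        rw [hT'parent, hιpf] at h1
        exact h1.symm
      have hcr' : ι c ≠ r' := by
        intro h
        apply hc.2
        apply hι_inj
        rw [hci, h, pparent_r']
      rw [pparent_ne hcr'] at hci
      rcases hιNP c with hcS | hcP
      · exact hS (hci ▸ hclosed _ hcS hcr')
      · exact hS (hci ▸ hcP)
  have hcond6 : (E'' ∪ Sp'').sup id ∩ (lam (T.parent r')).sup id ⊆ χ' T'.root := by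
    intro v hv
    obtain ⟨hv1, hv2⟩ := Finset.mem_inter.1 hv
    obtain ⟨f, hf, hvf⟩ := Finset.mem_sup.1 hv1
    have hvH : v ∈ (H.edges ∪ ∅ : Finset (Finset V)).sup id := hvertsH f hf v hvf
    -- find t with v ∈ χ t and NP t
    have hex : ∃ t, NP T S t ∧ v ∈ χ t := by
      rcases Finset.mem_union.1 hf with h | h
      · obtain ⟨t, htS, hft⟩ := hE''cov f h
        exact ⟨t, Or.inl htS, (mem_covAt_iff.1 hft).2.1 hvf⟩
      · obtain ⟨a, _, h2, rfl⟩ := hSp''mem f h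
        exact ⟨a, Or.inr h2, hvf⟩
    obtain ⟨t, htNP, hvt⟩ := hex
    have hpanc : T.isAnc (T.parent r') t := by
      refine RTree.isAnc_trans ?_ (anc_r'_of_NP hanc htNP)
      exact ⟨1, by simp⟩
    have hvp : v ∈ χ (T.parent r') :=
      hD.cond4 (T.parent r') t hpanc (Finset.mem_inter.2 ⟨hvt, hv2⟩)
    have honpath : T.onPath (T.parent r') t r' := by
      constructor
      · exact Or.inr (anc_r'_of_NP hanc htNP)
      · intro a ha1 _
        obtain ⟨i, hi⟩ := ha1
        exact ⟨i + 1, by rw [Function.iterate_succ_apply, ← hi]⟩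
    have : v ∈ χ r' := hD.cond3 v hvH (T.parent r') hvp t hvt r' honpath
    simp only [hχ'def, Function.comp, hT'root]
    rwa [hιrt]
  have hHD : IsHD H E'' Sp''
      ((E'' ∪ Sp'').sup id ∩ (lam (T.parent r')).sup id) T' χ' lam' :=
    ⟨hcond1, hcond2E, hcond2Sp, hcond3, hcond4, hcond5, hcond6⟩
  have hwidth : ∀ i, (lam' i).card ≤ k := by
    intro i
    by_cases hS : ι i ∈ S
    · simp only [hlam'def, if_pos hS]
      exact hw (ι i)
    · simp only [hlam'def, if_neg hS, Finset.card_singleton]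
      exact hk
  refine ⟨n, T', χ', lam', hHD, hwidth, ?_⟩
  -- balanced separator
  have hcovex : ∀ f ∈ E'' ∪ Sp'', ∃ i : Fin n, f ∈ covAt T' χ' E'' Sp'' i := by
    intro f hf
    have hsub : ∃ i, f ⊆ χ' i := by
      rcases Finset.mem_union.1 hf with h | h
      · exact hcond2E f h
      · obtain ⟨i, _, h2⟩ := hcond2Sp f h
        exact ⟨i, by rw [h2]⟩
    obtain ⟨i, hi⟩ := hsub
    obtain ⟨t, _, ht⟩ := cov_exists (T := T') hf hi
    exact ⟨t, ht⟩
  have hcovuni : ∀ (f : Finset V) (i j : Fin n), f ∈ covAt T' χ' E'' Sp'' i →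
      f ∈ covAt T' χ' E'' Sp'' j → i = j := by
    intro f i j h1 h2
    have hfU : f ∈ E'' ∪ Sp'' := (mem_covAt_iff.1 h1).1
    exact cov_unique hHD.cond3 (hUne f hfU) h1 h2
  have hcovsubU : ∀ X : Finset (Fin n), covTree T' χ' E'' Sp'' X ⊆ E'' ∪ Sp'' := by
    intro X f hf
    rw [mem_covTree_iff] at hf
    obtain ⟨t, _, ht⟩ := hf
    exact (mem_covAt_iff.1 ht).1
  have hpart : ∀ i : Fin n,
      covTree T' χ' E'' Sp'' (T'.outside i) =
        (E'' ∪ Sp'') \ covTree T' χ' E'' Sp'' (T'.subtree i) := by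
    intro i
    ext f
    simp only [Finset.mem_sdiff]
    constructor
    · intro hf
      rw [mem_covTree_iff] at hf
      obtain ⟨t, htout, hft⟩ := hf
      refine ⟨(mem_covAt_iff.1 hft).1, ?_⟩
      intro hcon
      rw [mem_covTree_iff] at hcon
      obtain ⟨t', ht'sub, hft'⟩ := hcon
      have heq : t = t' := hcovuni f t t' hft hft'
      subst heq
      rw [RTree.outside, Finset.mem_filter] at htout
      rw [mem_subtree_iff] at ht'sub
      exact htout.2 ht'sub
    · rintro ⟨hfU, hnot⟩
      obtain ⟨t, ht⟩ := hcovex f hfU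
      rw [mem_covTree_iff]
      refine ⟨t, ?_, ht⟩
      rw [RTree.outside, Finset.mem_filter]
      refine ⟨Finset.mem_univ t, fun hanc' => hnot ?_⟩
      rw [mem_covTree_iff]
      exact ⟨t, mem_subtree_iff.2 hanc', ht⟩
  have hcards : ∀ i : Fin n,
      (covTree T' χ' E'' Sp'' (T'.outside i)).card +
        (covTree T' χ' E'' Sp'' (T'.subtree i)).card = (E'' ∪ Sp'').card := by
    intro i
    rw [hpart i]
    exact Finset.card_sdiff_add_card_eq_card (hcovsubU _)
  have hmle : (E'' ∪ Sp'').card ≤ E''.card + Sp''.card := Finset.card_union_le _ _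
  have hE''ne : E''.Nonempty := by
    have hrne : r' ≠ T.parent r' := by
      intro h
      exact hr' (RTree.eq_root_of_parent_fix h.symm)
    have hchild : T.isChild r' (T.parent r') := ⟨rfl, hrne⟩
    obtain ⟨_, H2, _⟩ := hNF _ _ hchild
    obtain ⟨f, hf, hfχ⟩ := H2
    rw [mem_covTree_iff] at hf
    obtain ⟨t, htsub, hft⟩ := hf
    have htr : t = r' := by
      by_contra hne'
      exact (mem_covAt_iff.1 hft).2.2 r' ⟨mem_subtree_iff.1 htsub, Ne.symm hne'⟩ hfχ
    subst htr
    exact ⟨f, by rw [hEdef, mem_covTree_iff]; exact ⟨t, hrS, hft⟩⟩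
  have hthr : 1 ≤ E''.card + Sp''.card := by
    have := Finset.card_pos.2 hE''ne
    omega
  have houtroot : T'.outside T'.root = ∅ := by
    rw [RTree.outside]
    apply Finset.filter_eq_empty_iff.2
    exact fun x _ => not_not_intro (T'.isAnc_root x)
  set A : Finset (Fin n) := Finset.univ.filter
    (fun i => 2 * (covTree T' χ' E'' Sp'' (T'.outside i)).card < E''.card + Sp''.card)
    with hAdef
  have hrootA : T'.root ∈ A := by
    rw [hAdef, Finset.mem_filter]
    refine ⟨Finset.mem_univ _, ?_⟩
    have hcove : covTree T' χ' E'' Sp'' (∅ : Finset (Fin n)) = ∅ := by simp [covTree]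
    rw [houtroot, hcove]
    simp only [Finset.card_empty, Nat.mul_zero]
    omega
  obtain ⟨i0, hi0A, hi0min⟩ := A.exists_min_image (fun i => (T'.subtree i).card) ⟨_, hrootA⟩
  rw [hAdef, Finset.mem_filter] at hi0A
  refine ⟨i0, ?_, hi0A.2⟩
  intro c hc
  by_contra hgt
  push_neg at hgt
  have hcA : c ∈ A := by
    rw [hAdef, Finset.mem_filter]
    refine ⟨Finset.mem_univ _, ?_⟩
    have h1 := hcards c
    omega
  have hsubssub : T'.subtree c ⊂ T'.subtree i0 := by
    have hic : T'.isAnc i0 c := ⟨1, by simpa using hc.1⟩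
    constructor
    · intro x hx
      rw [mem_subtree_iff] at hx ⊢
      exact RTree.isAnc_trans hic hx
    · intro hcon
      have hmem : i0 ∈ T'.subtree c := hcon (mem_subtree_iff.2 (RTree.isAnc_refl T' i0))
      rw [mem_subtree_iff] at hmem
      exact hc.2 (RTree.isAnc_antisymm hmem hic)
  have hlt := Finset.card_lt_card hsubssub
  have hge := hi0min c hcA
  omega
end

section
/- Restriction of the parent search space preserves components: let H' be an extended subhypergraph, λ_p, λ_c edge sets, and comp_low the unique [λ_p]-component of H' with |comp_low| > |H'|/2. Suppose V(comp_low) ∩ ⋃λ_p ⊆ ⋃λ_c and e ∈ λ_p satisfies e ∩ ⋃λ_c = ∅. Then comp_low is also a [λ_p \ {e}]-component of H'. -/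
open scoped Classical

/-- restricting the parent search space preserves components: if
`comp_low` is the unique oversized `[λ_p]`-component, `V(comp_low) ∩ ⋃λ_p ⊆ ⋃λ_c`,
and `e ∈ λ_p` has empty intersection with `⋃λ_c`, then `comp_low` is also a
`[λ_p \ {e}]`-component. -/
theorem restrict_parent_search {V : Type} [DecidableEq V]
    (H : FinHypergraph V) (H' : ExtSubHG H)
    (lam_p lam_c : Finset (Finset V)) (comp_low : Finset (Finset V)) (e : Finset V)
    (hcomp : IsUComponent (H'.E ∪ H'.Sp) (lam_p.sup id) comp_low)
    (hbig : 2 * comp_low.card > H'.E.card + H'.Sp.card)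
    (hcover : comp_low.sup id ∩ lam_p.sup id ⊆ lam_c.sup id)
    (he : e ∈ lam_p) (hdisj : e ∩ lam_c.sup id = ∅) :
    IsUComponent (H'.E ∪ H'.Sp) ((lam_p.erase e).sup id) comp_low := by
  classical
  set F := H'.E ∪ H'.Sp with hF
  set U := lam_p.sup id with hU
  set U' := (lam_p.erase e).sup id with hU'
  obtain ⟨hsub, hne, hconn, hmax⟩ := hcomp
  have hUU : U' ⊆ U := Finset.sup_mono (Finset.erase_subset _ _)
  -- upgrade [U']-adjacency from comp_low to [U]-adjacency
  have hupg : ∀ f ∈ comp_low, ∀ g, UAdj F U' f g → UAdj F U f g := by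
    intro f hf g hadj
    obtain ⟨h1, h2, v, hv⟩ := hadj
    rw [Finset.mem_sdiff] at hv
    refine ⟨h1, h2, ⟨v, Finset.mem_sdiff.mpr ⟨hv.1, ?_⟩⟩⟩
    intro hvU
    -- v ∈ U but v ∉ U', so v ∈ e
    obtain ⟨a, ha, hva⟩ := Finset.mem_sup.mp hvU
    have hae : a = e := by
      by_contra hne'
      exact hv.2 (Finset.mem_sup.mpr ⟨a, Finset.mem_erase.mpr ⟨hne', ha⟩, hva⟩)
    rw [hae] at hva
    -- v ∈ V(comp_low) ∩ ⋃λ_p ⊆ ⋃λ_c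
    have hvf : v ∈ f := (Finset.mem_inter.mp hv.1).1
    have hvcomp : v ∈ comp_low.sup id := Finset.mem_sup.mpr ⟨f, hf, hvf⟩
    have hvc : v ∈ lam_c.sup id := hcover (Finset.mem_inter.mpr ⟨hvcomp, hvU⟩)
    have : v ∈ e ∩ lam_c.sup id := Finset.mem_inter.mpr ⟨hva, hvc⟩
    rw [hdisj] at this
    exact absurd this (Finset.notMem_empty v)
  -- comp_low is closed under [U]-adjacency
  have hclose : ∀ f ∈ comp_low, ∀ g, UAdj F U f g → g ∈ comp_low := by
    intro f hf g hadj
    by_contra hg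
    have hgF : g ∈ F := hadj.2.1
    have hsymm : UAdj F U g f := ⟨hadj.2.1, hadj.1, by
      rw [Finset.inter_comm]; exact hadj.2.2⟩
    obtain ⟨f₁, h1, f₂, h2, hnc⟩ :=
      hmax (insert g comp_low) (Finset.ssubset_insert hg)
        (Finset.insert_subset hgF hsub)
    refine hnc ?_
    rcases Finset.mem_insert.mp h1 with e1 | m1
    · rcases Finset.mem_insert.mp h2 with e2 | m2
      · rw [e1, e2]
        exact Relation.TransGen.head hsymm (Relation.TransGen.single hadj)
      · rw [e1]
        exact Relation.TransGen.head hsymm (hconn f hf f₂ m2)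
    · rcases Finset.mem_insert.mp h2 with e2 | m2
      · rw [e2]
        exact (hconn f₁ m1 f hf).tail hadj
      · exact hconn f₁ m1 f₂ m2
  -- [U']-paths starting in comp_low stay in comp_low
  have hstay : ∀ a b, UConn F U' a b → a ∈ comp_low → b ∈ comp_low := by
    intro a b h
    induction h with
    | single hadj => exact fun ha => hclose _ ha _ (hupg _ ha _ hadj)
    | tail h hadj ih => exact fun ha => hclose _ (ih ha) _ (hupg _ (ih ha) _ hadj)
  refine ⟨hsub, hne, ?_, ?_⟩
  · intro f hf g hg
    refine Relation.TransGen.mono ?_ f g (hconn f hf g hg)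
    rintro a b ⟨h1, h2, hv⟩
    exact ⟨h1, h2, hv.mono (Finset.sdiff_subset_sdiff le_rfl hUU)⟩
  · intro C' hC hC'F
    obtain ⟨f, hf⟩ := hne
    obtain ⟨g, hgC', hg⟩ := Finset.exists_of_ssubset hC
    exact ⟨f, hC.1 hf, g, hgC', fun h => hg (hstay f g h hf)⟩
end
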